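/- The six elements ĉ0, ĉ1, ĉ2, d̂0, d̂2, d̂3 of the ring R are algebraically independent over ℂ (note that d̂1 = 0 by construction). -/

import Mathlib

open MvPolynomial Complex

/-- The ring `R`: we realize the localization of `ℂ[α0,α1,α2,β0,β1,β2,β3]` at `α0, β0`
inside the fraction field, where `α0` and `β0` are invertible. -/
noncomputable abbrev Frac : Type := FractionRing (MvPolynomial (Fin 7) ℂ)

/-- `α0, α1, α2` (coefficients of the binary quadratic) -/
noncomputable def alph : ℕ → Frac
  | 0 => algebraMap (MvPolynomial (Fin 7) ℂ) Frac (X 0)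
  | 1 => algebraMap (MvPolynomial (Fin 7) ℂ) Frac (X 1)
  | 2 => algebraMap (MvPolynomial (Fin 7) ℂ) Frac (X 2)
  | _ => 0

/-- `β0, β1, β2, β3` (coefficients of the binary cubic) -/
noncomputable def bet : ℕ → Frac
  | 0 => algebraMap (MvPolynomial (Fin 7) ℂ) Frac (X 3)
  | 1 => algebraMap (MvPolynomial (Fin 7) ℂ) Frac (X 4)
  | 2 => algebraMap (MvPolynomial (Fin 7) ℂ) Frac (X 5)
  | 3 => algebraMap (MvPolynomial (Fin 7) ℂ) Frac (X 6)
  | _ => 0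

/-- `â_i = Σ_{j=0}^{i} α_j · C(2−j, 2−i) · (−α1/(2α0))^{i−j}` -/
noncomputable def ahat (i : ℕ) : Frac :=
  ∑ j ∈ Finset.range (i + 1),
    alph j * (Nat.choose (2 - j) (2 - i) : Frac) * (-alph 1 / (2 * alph 0)) ^ (i - j)

/-- `b̂_i = Σ_{j=0}^{i} β_j · C(3−j, 3−i) · (−α1/(2α0))^{i−j}` -/
noncomputable def bhat (i : ℕ) : Frac :=
  ∑ j ∈ Finset.range (i + 1),
    bet j * (Nat.choose (3 - j) (3 - i) : Frac) * (-alph 1 / (2 * alph 0)) ^ (i - j)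

/-- `ĉ_i = Σ_{j=0}^{i} α_j · C(2−j, 2−i) · (−β1/(3β0))^{i−j}` -/
noncomputable def chat (i : ℕ) : Frac :=
  ∑ j ∈ Finset.range (i + 1),
    alph j * (Nat.choose (2 - j) (2 - i) : Frac) * (-bet 1 / (3 * bet 0)) ^ (i - j)

/-- `d̂_i = Σ_{j=0}^{i} β_j · C(3−j, 3−i) · (−β1/(3β0))^{i−j}` -/
noncomputable def dhat (i : ℕ) : Frac :=
  ∑ j ∈ Finset.range (i + 1),
    bet j * (Nat.choose (3 - j) (3 - i) : Frac) * (-bet 1 / (3 * bet 0)) ^ (i - j)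

set_option maxHeartbeats 1000000
set_option synthInstance.maxHeartbeats 400000

-- auxiliary setup
noncomputable abbrev PR : Type := MvPolynomial (Fin 7) ℂ
noncomputable abbrev SR : Type := Localization.Away (X 3 : PR)

noncomputable def aa (i : Fin 7) : SR := algebraMap PR SR (X i)
noncomputable def jj : SR := IsLocalization.Away.invSelf (X 3 : PR)
noncomputable def ee : SR := algebraMap ℂ SR (3⁻¹) * jj
noncomputable def tS : SR := -(aa 4) * ee

lemma hjj : aa 3 * jj = 1 := IsLocalization.Away.mul_invSelf (X 3 : PR)

lemma hee : ee * (3 * aa 3) = 1 := by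
  have h3 : (3 : SR) = algebraMap ℂ SR 3 := by
    rw [map_ofNat]
  calc ee * (3 * aa 3) = (algebraMap ℂ SR (3⁻¹) * algebraMap ℂ SR 3) * (aa 3 * jj) := by
        rw [h3, ee]; ring
    _ = 1 := by rw [← map_mul, hjj, inv_mul_cancel₀ (by norm_num : (3:ℂ) ≠ 0)]; simp

noncomputable def xs : Fin 6 → SR :=
  ![aa 0, 2*aa 0*tS + aa 1, aa 0*tS^2 + aa 1*tS + aa 2, aa 3,
    3*aa 3*tS^2 + 2*aa 4*tS + aa 5, aa 3*tS^3 + aa 4*tS^2 + aa 5*tS + aa 6]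

noncomputable def vs : Fin 7 → SR :=
  ![aa 0, aa 1 - 2*aa 0*tS, aa 2 + aa 0*tS^2 - aa 1*tS, aa 3, aa 4,
    aa 5 + 3*aa 3*tS^2, aa 6 - aa 3*tS^3 - aa 5*tS]

lemma hunit : ∀ y : Submonoid.powers (X 3 : PR), IsUnit ((aeval vs : PR →ₐ[ℂ] SR) y) := by
  rintro ⟨y, n, rfl⟩
  have : (aeval vs : PR →ₐ[ℂ] SR) ((X 3 : PR) ^ n) = (aa 3) ^ n := by
    simp [vs, aa]
  rw [this]
  exact (isUnit_iff_exists_inv.mpr ⟨jj, hjj⟩).pow n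

noncomputable def F : SR →ₐ[ℂ] SR := IsLocalization.liftAlgHom (f := (aeval vs : PR →ₐ[ℂ] SR)) hunit

lemma hFalg (p : PR) : F (algebraMap PR SR p) = aeval vs p := by
  simp [F, IsLocalization.liftAlgHom_apply, IsLocalization.lift_eq]

lemma hFa (i : Fin 7) : F (aa i) = vs i := by rw [aa, hFalg]; simp

lemma hFj : F jj = jj := by
  have h1 : F (aa 3) * F jj = 1 := by rw [← map_mul, hjj, map_one]
  rw [hFa] at h1
  have : vs 3 = aa 3 := by simp [vs]
  rw [this] at h1
  calc F jj = (aa 3 * jj) * F jj := by rw [hjj, one_mul]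
    _ = jj * (aa 3 * F jj) := by ring
    _ = jj := by rw [h1, mul_one]

lemma hFt : F tS = tS := by
  rw [tS, ee, map_mul, map_neg, map_mul, hFa, AlgHom.commutes, hFj]
  simp [vs, tS, ee]

lemma ha4 : aa 4 = -(3 * aa 3 * tS) := by
  rw [tS]; linear_combination (-aa 4) * hee

lemma hFx0 : F (xs 0) = aa 0 := by
  simp only [show xs 0 = aa 0 from rfl, hFa, show vs 0 = aa 0 from rfl]

lemma hFx1 : F (xs 1) = aa 1 := by
  simp only [show xs 1 = 2*aa 0*tS + aa 1 from rfl, map_add, map_mul, map_ofNat, hFa, hFt,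
    show vs 0 = aa 0 from rfl, show vs 1 = aa 1 - 2*aa 0*tS from rfl]
  ring

lemma hFx2 : F (xs 2) = aa 2 := by
  simp only [show xs 2 = aa 0*tS^2 + aa 1*tS + aa 2 from rfl, map_add, map_mul, map_pow, hFa, hFt,
    show vs 0 = aa 0 from rfl, show vs 1 = aa 1 - 2*aa 0*tS from rfl,
    show vs 2 = aa 2 + aa 0*tS^2 - aa 1*tS from rfl]
  ring

lemma hFx3 : F (xs 3) = aa 3 := by
  simp only [show xs 3 = aa 3 from rfl, hFa, show vs 3 = aa 3 from rfl]

lemma hFx4 : F (xs 4) = aa 5 := by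
  simp only [show xs 4 = 3*aa 3*tS^2 + 2*aa 4*tS + aa 5 from rfl, map_add, map_mul, map_pow,
    map_ofNat, hFa, hFt, show vs 3 = aa 3 from rfl, show vs 4 = aa 4 from rfl,
    show vs 5 = aa 5 + 3*aa 3*tS^2 from rfl]
  rw [ha4]; ring

lemma hFx5 : F (xs 5) = aa 6 := by
  simp only [show xs 5 = aa 3*tS^3 + aa 4*tS^2 + aa 5*tS + aa 6 from rfl, map_add, map_mul,
    map_pow, hFa, hFt, show vs 3 = aa 3 from rfl, show vs 4 = aa 4 from rfl,
    show vs 5 = aa 5 + 3*aa 3*tS^2 from rfl, show vs 6 = aa 6 - aa 3*tS^3 - aa 5*tS from rfl]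
  rw [ha4]; ring

lemma hMle : Submonoid.powers (X 3 : PR) ≤ nonZeroDivisors PR :=
  powers_le_nonZeroDivisors_of_noZeroDivisors (MvPolynomial.X_ne_zero 3)

lemma haainj : Function.Injective (algebraMap PR SR) := IsLocalization.injective SR hMle

lemma haind : AlgebraicIndependent ℂ aa := by
  have h := MvPolynomial.algebraicIndependent_X (Fin 7) ℂ
  exact h.map' (f := IsScalarTower.toAlgHom ℂ PR SR) haainj

lemma hxsind : AlgebraicIndependent ℂ xs := by
  apply AlgebraicIndependent.of_comp F
  have hemb : Function.Injective (![0,1,2,3,5,6] : Fin 6 → Fin 7) := by decide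
  have h2 := haind.comp _ hemb
  convert h2 using 1
  funext i
  simp only [Function.comp_apply]
  fin_cases i
  · exact hFx0
  · exact hFx1
  · exact hFx2
  · exact hFx3
  · exact hFx4
  · exact hFx5

lemma hι_unit : ∀ y : Submonoid.powers (X 3 : PR),
    IsUnit ((IsScalarTower.toAlgHom ℂ PR Frac) y) := by
  rintro ⟨y, hy⟩
  have hne : (y : PR) ≠ 0 := nonZeroDivisors.ne_zero (hMle hy)
  simp only [IsScalarTower.coe_toAlgHom']
  exact isUnit_iff_ne_zero.2 (by
    rw [Ne, IsFractionRing.to_map_eq_zero_iff]; exact hne)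

noncomputable def ι : SR →ₐ[ℂ] Frac := IsLocalization.liftAlgHom (M := Submonoid.powers (X 3 : PR)) hι_unit

lemma hιinj : Function.Injective ι := by
  have : ⇑ι = ⇑(IsLocalization.lift (M := Submonoid.powers (X 3 : PR)) (S := SR) hι_unit) := rfl
  rw [this, IsLocalization.lift_injective_iff]
  intro x y
  constructor
  · intro h
    exact congrArg _ (haainj h)
  · intro h
    have hxy : x = y := IsFractionRing.injective PR Frac h
    rw [hxy]

lemma hιalg (p : PR) : ι (algebraMap PR SR p) = algebraMap PR Frac p := by
  simp [ι, IsLocalization.liftAlgHom_apply, IsLocalization.lift_eq]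

lemma hιa (i : Fin 7) : ι (aa i) = algebraMap PR Frac (X i) := hιalg _

lemma hb0 : bet 0 ≠ 0 := by
  rw [bet, Ne, IsFractionRing.to_map_eq_zero_iff]
  exact MvPolynomial.X_ne_zero 3

lemma hιt : ι tS = -bet 1 / (3 * bet 0) := by
  have h30 : (3 : Frac) * bet 0 ≠ 0 := by
    intro h
    rcases mul_eq_zero.1 h with h | h
    · norm_num at h
    · exact hb0 h
  rw [eq_div_iff h30]
  have hj1 : bet 0 * ι jj = 1 := by
    have := congrArg ι hjj
    rw [map_mul, map_one, hιa] at this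
    exact this
  have h3inv : (algebraMap ℂ Frac 3⁻¹) * 3 = 1 := by
    rw [show (3:Frac) = algebraMap ℂ Frac 3 from (map_ofNat _ 3).symm, ← map_mul]
    norm_num
  have ht4 : ι (aa 4) = bet 1 := (hιa 4).trans rfl
  rw [tS, ee, map_mul, map_neg, map_mul, AlgHom.commutes, ht4]
  linear_combination (-3 * bet 1 * (algebraMap ℂ Frac 3⁻¹)) * hj1 + (-bet 1) * h3inv

lemma hc0 : chat 0 = ι (xs 0) := by
  rw [show xs 0 = aa 0 from rfl, hιa]
  simp [chat, alph]

lemma hc1 : chat 1 = ι (xs 1) := by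
  rw [show xs 1 = 2*aa 0*tS + aa 1 from rfl, map_add, map_mul, map_mul, map_ofNat, hιa, hιa, hιt]
  rw [chat, Finset.sum_range_succ, Finset.sum_range_succ, Finset.sum_range_zero]
  norm_num [alph, -mul_eq_mul_right_iff]
  ring

lemma hc2 : chat 2 = ι (xs 2) := by
  rw [show xs 2 = aa 0*tS^2 + aa 1*tS + aa 2 from rfl, map_add, map_add, map_mul, map_mul,
    map_pow, hιa, hιa, hιa, hιt]
  rw [chat, Finset.sum_range_succ, Finset.sum_range_succ, Finset.sum_range_succ,
    Finset.sum_range_zero]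
  norm_num [alph, -mul_eq_mul_right_iff]

lemma hd0 : dhat 0 = ι (xs 3) := by
  rw [show xs 3 = aa 3 from rfl, hιa]
  simp [dhat, bet]

lemma hd2 : dhat 2 = ι (xs 4) := by
  rw [show xs 4 = 3*aa 3*tS^2 + 2*aa 4*tS + aa 5 from rfl, map_add, map_add, map_mul, map_mul,
    map_mul, map_mul, map_pow, map_ofNat, map_ofNat, hιa, hιa, hιa, hιt]
  rw [dhat, Finset.sum_range_succ, Finset.sum_range_succ, Finset.sum_range_succ,
    Finset.sum_range_zero]
  norm_num [bet, -mul_eq_mul_right_iff]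
  ring

lemma hd3 : dhat 3 = ι (xs 5) := by
  rw [show xs 5 = aa 3*tS^3 + aa 4*tS^2 + aa 5*tS + aa 6 from rfl, map_add, map_add, map_add,
    map_mul, map_mul, map_mul, map_pow, map_pow, hιa, hιa, hιa, hιa, hιt]
  rw [dhat, Finset.sum_range_succ, Finset.sum_range_succ, Finset.sum_range_succ,
    Finset.sum_range_succ, Finset.sum_range_zero]
  norm_num [bet, -mul_eq_mul_right_iff]

/-- The six elements `ĉ0, ĉ1, ĉ2, d̂0, d̂2, d̂3` of `R` are algebraically independent
over ℂ. -/
theorem stmt_12 :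
    AlgebraicIndependent ℂ
      (![chat 0, chat 1, chat 2, dhat 0, dhat 2, dhat 3] : Fin 6 → Frac) := by
  have h := hxsind.map' (f := ι) hιinj
  convert h using 1
  funext i
  simp only [Function.comp_apply]
  fin_cases i
  · exact hc0
  · exact hc1
  · exact hc2
  · exact hd0
  · exact hd2
  · exact hd3
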